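/- Finite mixtures of gamma distributions are identifiable: let n, m ≥ 1, let w : Fin n → ℝ and w' : Fin m → ℝ be weights with wᵢ > 0, Σᵢ wᵢ = 1, w'ⱼ > 0, Σⱼ w'ⱼ = 1, and let (aᵢ, bᵢ)_{i ∈ Fin n} and (a'ⱼ, b'ⱼ)_{j ∈ Fin m} be shape–rate pairs with all entries positive and the pairs within each family pairwise distinct. If Σ_{i ∈ Fin n} wᵢ g(y; aᵢ, bᵢ) = Σ_{j ∈ Fin m} w'ⱼ g(y; a'ⱼ, b'ⱼ) for every y > 0, then n = m and there exists a bijection e : Fin n ≃ Fin m with w'_{e(i)} = wᵢ, a'_{e(i)} = aᵢ and b'_{e(i)} = bᵢ for all i. -/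

import Mathlib

open Filter Topology Finset
lemma exp_rpow_key {ι : Type*} (s : Finset ι) (c α β : ι → ℝ)
    (hβ : ∀ k ∈ s, 0 < β k)
    (hinj : ∀ k ∈ s, ∀ l ∈ s, α k = α l → β k = β l → k = l)
    (h : ∀ y : ℝ, 0 < y → ∑ k ∈ s, c k * y ^ (α k) * Real.exp (-(β k * y)) = 0) :
    ∀ k ∈ s, c k = 0 := by
  classical
  by_contra hc
  push_neg at hc
  obtain ⟨k1, hk1s, hk1⟩ := hc
  set T := s.filter (fun k => c k ≠ 0) with hT
  have hTne : T.Nonempty := ⟨k1, by simp [hT, hk1s, hk1]⟩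
  have hTs : ∀ k ∈ T, k ∈ s := fun k hk => (Finset.mem_filter.1 hk).1
  set B := T.inf' hTne β with hB
  have hTB : (T.filter (fun k => β k = B)).Nonempty := by
    obtain ⟨k, hk, hkB⟩ := Finset.exists_mem_eq_inf' hTne β
    exact ⟨k, Finset.mem_filter.2 ⟨hk, hkB.symm⟩⟩
  set A := (T.filter (fun k => β k = B)).sup' hTB α with hA
  obtain ⟨k0, hk0, hk0A'⟩ := Finset.exists_mem_eq_sup' hTB α
  have hk0A : A = α k0 := hA.trans hk0A'
  have hk0T : k0 ∈ T := (Finset.mem_filter.1 hk0).1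
  have hk0B : β k0 = B := (Finset.mem_filter.1 hk0).2
  have hsumT : ∀ y : ℝ, 0 < y → ∑ k ∈ T, c k * y ^ (α k) * Real.exp (-(β k * y)) = 0 := by
    intro y hy
    rw [hT, Finset.sum_filter_of_ne, h y hy]
    intro x hx hne hcx
    exact hne (by simp [hcx])
  set g : ι → ℝ → ℝ := fun k y => c k * y ^ (α k - A) * Real.exp (-((β k - B) * y)) with hg
  have hgzero : ∀ y : ℝ, 0 < y → ∑ k ∈ T, g k y = 0 := by
    intro y hy
    have key : ∑ k ∈ T, g k y
        = (∑ k ∈ T, c k * y ^ (α k) * Real.exp (-(β k * y))) * (y ^ (-A) * Real.exp (B * y)) := by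
      rw [Finset.sum_mul]
      refine Finset.sum_congr rfl fun k hk => ?_
      simp only [hg]
      rw [sub_eq_add_neg, Real.rpow_add hy]
      have he : -((β k - B) * y) = -(β k * y) + B * y := by ring
      rw [he, Real.exp_add]
      ring
    rw [key, hsumT y hy, zero_mul]
  have hlim0 : Tendsto (fun y => ∑ k ∈ T, g k y) atTop (nhds 0) := by
    have hev : (fun y => ∑ k ∈ T, g k y) =ᶠ[atTop] (fun _ => (0:ℝ)) := by
      filter_upwards [eventually_gt_atTop 0] with y hy using hgzero y hy
    rw [Filter.tendsto_congr' hev]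
    exact tendsto_const_nhds
  have hlimc : Tendsto (fun y => ∑ k ∈ T, g k y) atTop (nhds (c k0)) := by
    have h1 : Tendsto (fun y => ∑ k ∈ T, g k y) atTop
        (nhds (∑ k ∈ T, if k = k0 then c k0 else 0)) := by
      refine tendsto_finset_sum _ fun k hk => ?_
      by_cases hkk : k = k0
      · subst hkk
        have hfun : g k = fun _ => c k := by
          funext y
          simp [hg, hk0A, hk0B]
        rw [if_pos rfl, hfun]
        exact tendsto_const_nhds
      · rw [if_neg hkk]
        by_cases hkB : β k = B
        · -- same rate, smaller shape
          have hkf : k ∈ T.filter (fun k => β k = B) := Finset.mem_filter.2 ⟨hk, hkB⟩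
          have hle : α k ≤ A := Finset.le_sup' α hkf
          have hne : α k ≠ A := by
            intro hEq
            exact hkk (hinj k (hTs k hk) k0 (hTs k0 hk0T)
              (by rw [hEq, hk0A]) (by rw [hkB, hk0B]))
          have hlt : 0 < -(α k - A) := by
            simp only [neg_sub, sub_pos]
            exact lt_of_le_of_ne hle hne
          have hfun : g k = fun y => c k * y ^ (-(-(α k - A))) := by
            funext y
            simp [hg, hkB]
          rw [hfun]
          have := (tendsto_rpow_neg_atTop hlt).const_mul (c k)
          simpa using this
        · -- strictly larger rate
          have hlt : 0 < β k - B := by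
            have := Finset.inf'_le β hk
            rw [← hB] at this
            exact sub_pos.2 (lt_of_le_of_ne this (Ne.symm hkB))
          have hfun : g k
              = fun y => c k * (y ^ (α k - A) * Real.exp (-(β k - B) * y)) := by
            funext y
            simp only [hg, neg_mul]
            ring
          rw [hfun]
          have := (tendsto_rpow_mul_exp_neg_mul_atTop_nhds_zero (α k - A) (β k - B)
            hlt).const_mul (c k)
          simpa using this
    have hsum : (∑ k ∈ T, if k = k0 then c k0 else 0) = c k0 := by
      rw [Finset.sum_ite_eq' T k0 (fun _ => c k0), if_pos hk0T]
    rwa [hsum] at h1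
  have : c k0 = 0 := tendsto_nhds_unique hlimc hlim0
  exact (Finset.mem_filter.1 hk0T).2 this


/-- The gamma density with shape `a > 0` and rate `b > 0`: equals
`bᵃ / Γ(a) · y^(a−1) · e^(−b y)` for `y > 0` and `0` for `y ≤ 0`. -/
noncomputable def gammaDensity (a b y : ℝ) : ℝ :=
  if 0 < y then b ^ a / Real.Gamma a * y ^ (a - 1) * Real.exp (-(b * y)) else 0

/-- Finite mixtures of gamma distributions are identifiable: two finite mixtures with
positive weights summing to one and pairwise distinct positive (shape, rate) pairs that
agree at every `y > 0` must have the same number of components and matching parameters up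
to a bijection of the component labels. -/
theorem gamma_mixture_identifiable
    {n m : ℕ} (hn : 1 ≤ n) (hm : 1 ≤ m)
    (w : Fin n → ℝ) (w' : Fin m → ℝ)
    (a b : Fin n → ℝ) (a' b' : Fin m → ℝ)
    (hw : ∀ i, 0 < w i) (hwsum : ∑ i, w i = 1)
    (hw' : ∀ j, 0 < w' j) (hw'sum : ∑ j, w' j = 1)
    (ha : ∀ i, 0 < a i) (hb : ∀ i, 0 < b i)
    (ha' : ∀ j, 0 < a' j) (hb' : ∀ j, 0 < b' j)
    (hdist : Function.Injective (fun i => (a i, b i)))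
    (hdist' : Function.Injective (fun j => (a' j, b' j)))
    (heq : ∀ y : ℝ, 0 < y →
      ∑ i, w i * gammaDensity (a i) (b i) y = ∑ j, w' j * gammaDensity (a' j) (b' j) y) :
    n = m ∧ ∃ e : Fin n ≃ Fin m, ∀ i,
      w' (e i) = w i ∧ a' (e i) = a i ∧ b' (e i) = b i := by
  classical
  -- positive coefficients including normalization
  set κ : Fin n → ℝ := fun i => w i * ((b i) ^ (a i) / Real.Gamma (a i)) with hκ
  set κ' : Fin m → ℝ := fun j => w' j * ((b' j) ^ (a' j) / Real.Gamma (a' j)) with hκ'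
  have hκpos : ∀ i, 0 < κ i := fun i => by
    have := Real.Gamma_pos_of_pos (ha i)
    exact mul_pos (hw i) (div_pos (Real.rpow_pos_of_pos (hb i) _) this)
  have hκ'pos : ∀ j, 0 < κ' j := fun j => by
    have := Real.Gamma_pos_of_pos (ha' j)
    exact mul_pos (hw' j) (div_pos (Real.rpow_pos_of_pos (hb' j) _) this)
  -- set of all pairs
  set P : Finset (ℝ × ℝ) :=
    (Finset.univ.image fun i => (a i, b i)) ∪ (Finset.univ.image fun j => (a' j, b' j)) with hP
  set c : ℝ × ℝ → ℝ := fun p =>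
    (∑ i ∈ Finset.univ.filter (fun i => (a i, b i) = p), κ i)
      - (∑ j ∈ Finset.univ.filter (fun j => (a' j, b' j) = p), κ' j) with hc
  have hmemP : ∀ i, (a i, b i) ∈ P := fun i => by
    rw [hP]
    exact Finset.mem_union_left _ (Finset.mem_image.2 ⟨i, Finset.mem_univ i, rfl⟩)
  have hmemP' : ∀ j, (a' j, b' j) ∈ P := fun j => by
    rw [hP]
    exact Finset.mem_union_right _ (Finset.mem_image.2 ⟨j, Finset.mem_univ j, rfl⟩)
  have hczero : ∀ p ∈ P, c p = 0 := by
    refine exp_rpow_key P c (fun p => p.1 - 1) (fun p => p.2) ?_ ?_ ?_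
    · intro p hp
      rw [hP, Finset.mem_union] at hp
      rcases hp with hp | hp <;> obtain ⟨i, _, rfl⟩ := Finset.mem_image.1 hp
      · exact hb i
      · exact hb' i
    · intro p _ q _ h1 h2
      exact Prod.ext (by linarith) h2
    · intro y hy
      have expand : ∀ p : ℝ × ℝ, c p * y ^ (p.1 - 1) * Real.exp (-(p.2 * y))
          = (∑ i ∈ Finset.univ.filter (fun i => (a i, b i) = p),
              κ i * y ^ (a i - 1) * Real.exp (-(b i * y)))
            - (∑ j ∈ Finset.univ.filter (fun j => (a' j, b' j) = p),
              κ' j * y ^ (a' j - 1) * Real.exp (-(b' j * y))) := by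
        intro p
        rw [hc]
        simp only [sub_mul, Finset.sum_mul]
        congr 1
        · refine Finset.sum_congr rfl fun i hi => ?_
          have : (a i, b i) = p := (Finset.mem_filter.1 hi).2
          rw [← this]
        · refine Finset.sum_congr rfl fun j hj => ?_
          have : (a' j, b' j) = p := (Finset.mem_filter.1 hj).2
          rw [← this]
      calc ∑ p ∈ P, c p * y ^ (p.1 - 1) * Real.exp (-(p.2 * y))
          = (∑ p ∈ P, ∑ i ∈ Finset.univ.filter (fun i => (a i, b i) = p),
              κ i * y ^ (a i - 1) * Real.exp (-(b i * y)))
            - (∑ p ∈ P, ∑ j ∈ Finset.univ.filter (fun j => (a' j, b' j) = p),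
              κ' j * y ^ (a' j - 1) * Real.exp (-(b' j * y))) := by
            rw [← Finset.sum_sub_distrib]
            exact Finset.sum_congr rfl fun p _ => expand p
        _ = (∑ i, κ i * y ^ (a i - 1) * Real.exp (-(b i * y)))
            - (∑ j, κ' j * y ^ (a' j - 1) * Real.exp (-(b' j * y))) := by
            congr 1
            · exact Finset.sum_fiberwise_of_maps_to (fun i _ => hmemP i) _
            · exact Finset.sum_fiberwise_of_maps_to (fun j _ => hmemP' j) _
        _ = 0 := by
            have h1 : ∀ i, κ i * y ^ (a i - 1) * Real.exp (-(b i * y))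
                = w i * gammaDensity (a i) (b i) y := by
              intro i
              rw [gammaDensity, if_pos hy, hκ]
              ring
            have h2 : ∀ j, κ' j * y ^ (a' j - 1) * Real.exp (-(b' j * y))
                = w' j * gammaDensity (a' j) (b' j) y := by
              intro j
              rw [gammaDensity, if_pos hy, hκ']
              ring
            simp only [h1, h2]
            rw [heq y hy, sub_self]
  -- matching: each i has a unique partner j with same pair and weight
  have hmatch : ∀ i, ∃ j, a' j = a i ∧ b' j = b i ∧ w' j = w i := by
    intro i
    have h0 := hczero _ (hmemP i)
    simp only [hc] at h0
    have hfib1 : Finset.univ.filter (fun i' => (a i', b i') = (a i, b i)) = {i} := by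
      ext i'
      simp only [Finset.mem_filter, Finset.mem_univ, true_and, Finset.mem_singleton]
      constructor
      · intro h; exact hdist h
      · rintro rfl; rfl
    rw [hfib1, Finset.sum_singleton, sub_eq_zero] at h0
    have hne : (Finset.univ.filter (fun j => (a' j, b' j) = (a i, b i))).Nonempty := by
      by_contra hemp
      rw [Finset.not_nonempty_iff_eq_empty] at hemp
      rw [hemp, Finset.sum_empty] at h0
      exact absurd h0 (ne_of_gt (hκpos i))
    obtain ⟨j, hj⟩ := hne
    have hjp : (a' j, b' j) = (a i, b i) := (Finset.mem_filter.1 hj).2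
    have hfib2 : Finset.univ.filter (fun j' => (a' j', b' j') = (a i, b i)) = {j} := by
      ext j'
      simp only [Finset.mem_filter, Finset.mem_univ, true_and, Finset.mem_singleton]
      constructor
      · intro h; exact hdist' (h.trans hjp.symm)
      · rintro rfl; exact hjp
    rw [hfib2, Finset.sum_singleton] at h0
    have haj : a' j = a i := congrArg Prod.fst hjp
    have hbj : b' j = b i := congrArg Prod.snd hjp
    refine ⟨j, haj, hbj, ?_⟩
    simp only [hκ, hκ', haj, hbj] at h0
    have hfac : 0 < (b i) ^ (a i) / Real.Gamma (a i) :=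
      div_pos (Real.rpow_pos_of_pos (hb i) _) (Real.Gamma_pos_of_pos (ha i))
    exact (mul_right_cancel₀ (ne_of_gt hfac) h0).symm
  have hmatch' : ∀ j, ∃ i, a i = a' j ∧ b i = b' j := by
    intro j
    have h0 := hczero _ (hmemP' j)
    simp only [hc] at h0
    have hfib2 : Finset.univ.filter (fun j' => (a' j', b' j') = (a' j, b' j)) = {j} := by
      ext j'
      simp only [Finset.mem_filter, Finset.mem_univ, true_and, Finset.mem_singleton]
      constructor
      · intro h; exact hdist' h
      · rintro rfl; rfl
    rw [hfib2, Finset.sum_singleton, sub_eq_zero] at h0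
    have hne : (Finset.univ.filter (fun i => (a i, b i) = (a' j, b' j))).Nonempty := by
      by_contra hemp
      rw [Finset.not_nonempty_iff_eq_empty] at hemp
      rw [hemp, Finset.sum_empty] at h0
      exact absurd h0.symm (ne_of_gt (hκ'pos j))
    obtain ⟨i, hi⟩ := hne
    have hip : (a i, b i) = (a' j, b' j) := (Finset.mem_filter.1 hi).2
    exact ⟨i, congrArg Prod.fst hip, congrArg Prod.snd hip⟩
  -- build bijection
  set f : Fin n → Fin m := fun i => (hmatch i).choose with hf
  have hfspec : ∀ i, a' (f i) = a i ∧ b' (f i) = b i ∧ w' (f i) = w i :=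
    fun i => (hmatch i).choose_spec
  have hfinj : Function.Injective f := by
    intro i1 i2 hEq
    apply hdist
    have s1 := hfspec i1; have s2 := hfspec i2
    simp only
    rw [← s1.1, ← s1.2.1, ← s2.1, ← s2.2.1, hEq]
  set g' : Fin m → Fin n := fun j => (hmatch' j).choose with hg'
  have hg'spec : ∀ j, a (g' j) = a' j ∧ b (g' j) = b' j := fun j => (hmatch' j).choose_spec
  have hg'inj : Function.Injective g' := by
    intro j1 j2 hEq
    apply hdist'
    have s1 := hg'spec j1; have s2 := hg'spec j2
    simp only
    rw [← s1.1, ← s1.2, ← s2.1, ← s2.2, hEq]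
  have hnm : n = m := by
    have h1 : n ≤ m := by
      simpa using Fintype.card_le_of_injective f hfinj
    have h2 : m ≤ n := by
      simpa using Fintype.card_le_of_injective g' hg'inj
    omega
  refine ⟨hnm, ?_⟩
  have hbij : Function.Bijective f :=
    (Fintype.bijective_iff_injective_and_card f).2 ⟨hfinj, by simp [hnm]⟩
  exact ⟨Equiv.ofBijective f hbij, fun i => ⟨(hfspec i).2.2, (hfspec i).1, (hfspec i).2.1⟩⟩
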